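/- If u, w ∈ S_n are joined by a decreasing path γ in the extended k-Bruhat order, then the length of γ equals #([k] ∩ M(u⁻¹w)), the number of indices i ≤ k with u(i) ≠ w(i). If instead γ is an increasing path from u to w, then its length equals #({k+1,...,n} ∩ M(u⁻¹w)). -/

import Mathlib

/-- `IsKPath k u l` : starting from `u`, the list of position pairs `l`
describes a path of `k`-edges in the Bruhat graph of `S_n`. -/
def IsKPath {n : ℕ} (k : ℕ) : Equiv.Perm (Fin n) → List (Fin n × Fin n) → Prop
  | _, [] => True
  | u, p :: l => p.1.val < k ∧ k ≤ p.2.val ∧ u p.1 < u p.2 ∧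
      IsKPath k (u * Equiv.swap p.1 p.2) l

/-- The labels `τ_i = w_{i-1}(a_i)` of the edges of a path. -/
def pathLabels {n : ℕ} : Equiv.Perm (Fin n) → List (Fin n × Fin n) → List (Fin n)
  | _, [] => []
  | u, p :: l => u p.1 :: pathLabels (u * Equiv.swap p.1 p.2) l

/-- The endpoint `u · t_{a₁b₁} ⋯ t_{a_m b_m}` of a path starting at `u`. -/
def pathEnd {n : ℕ} (u : Equiv.Perm (Fin n)) (l : List (Fin n × Fin n)) : Equiv.Perm (Fin n) :=
  u * (l.map fun p => Equiv.swap p.1 p.2).prod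

lemma pathEnd_cons {n : ℕ} (u : Equiv.Perm (Fin n)) (p : Fin n × Fin n)
    (t : List (Fin n × Fin n)) :
    pathEnd u (p :: t) = pathEnd (u * Equiv.swap p.1 p.2) t := by
  simp [pathEnd, mul_assoc]

lemma dec_lemma {n : ℕ} (k : ℕ) (l : List (Fin n × Fin n)) :
    ∀ (u : Equiv.Perm (Fin n)), IsKPath k u l → List.Chain' (· > ·) (pathLabels u l) →
    (∀ i ∈ l.map Prod.fst, i.val < k) ∧
    (l.map Prod.fst).Nodup ∧
    (∀ i : Fin n, i.val < k → (pathEnd u l i ≠ u i ↔ i ∈ l.map Prod.fst)) ∧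
    (∀ i : Fin n, i.val < k → i ∈ l.map Prod.fst → u i ∈ pathLabels u l) := by
  induction l with
  | nil => intro u _ _; simp [pathEnd]
  | cons p t ih =>
    obtain ⟨a, b⟩ := p
    intro u hpath hchain
    obtain ⟨ha, hb, hlt, hpath'⟩ := hpath
    have ha' : a.val < k := ha
    have hb' : k ≤ b.val := hb
    set u' := u * Equiv.swap a b with hu'
    have hlab : pathLabels u ((a,b)::t) = u a :: pathLabels u' t := rfl
    rw [hlab] at hchain
    have hchain' : List.Chain' (· > ·) (pathLabels u' t) := hchain.tail
    have hallless : ∀ τ ∈ pathLabels u' t, τ < u a := by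
      have hp := (List.isChain_iff_pairwise).1 hchain
      exact fun τ hτ => (List.pairwise_cons.1 hp).1 τ hτ
    obtain ⟨ih0, ih1, ih2, ih3⟩ := ih u' hpath' hchain'
    have hu'a : u' a = u b := by simp [hu', Equiv.Perm.mul_apply]
    have hanotin : a ∉ t.map Prod.fst := by
      intro hmem
      have h1 := hallless _ (ih3 a ha hmem)
      rw [hu'a] at h1
      exact absurd hlt (not_lt.2 h1.le)
    have hendeq : pathEnd u ((a,b)::t) = pathEnd u' t := pathEnd_cons u (a,b) t
    have hfix : ∀ i : Fin n, i ≠ a → i.val < k → u' i = u i := by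
      intro i hia hik
      have hib : i ≠ b := by
        intro h
        rw [h] at hik
        omega
      simp [hu', Equiv.Perm.mul_apply, Equiv.swap_apply_of_ne_of_ne hia hib]
    have hmapcons : ((a,b)::t).map Prod.fst = a :: t.map Prod.fst := rfl
    refine ⟨?_, ?_, ?_, ?_⟩
    · intro i hi
      rw [hmapcons, List.mem_cons] at hi
      rcases hi with h | h
      · rw [h]; exact ha'
      · exact ih0 i h
    · rw [hmapcons]
      exact List.nodup_cons.2 ⟨hanotin, ih1⟩
    · intro i hik
      rw [hendeq, hmapcons, List.mem_cons]
      by_cases hia : i = a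
      · subst hia
        have h1 : pathEnd u' t i = u' i := by
          by_contra h
          exact hanotin ((ih2 i hik).1 h)
        constructor
        · intro _; exact Or.inl rfl
        · intro _
          rw [h1, hu'a]
          exact fun h => absurd hlt (h ▸ lt_irrefl _)
      · rw [← hfix i hia hik, ih2 i hik]
        constructor
        · exact Or.inr
        · rintro (h | h)
          · exact absurd h hia
          · exact h
    · intro i hik hi
      rw [hmapcons, List.mem_cons] at hi
      rw [hlab]
      by_cases hia : i = a
      · subst hia; exact List.mem_cons_self
      · rcases hi with h | h
        · exact absurd h hia
        · rw [← hfix i hia hik]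
          exact List.mem_cons_of_mem _ (ih3 i hik h)

lemma inc_lemma {n : ℕ} (k : ℕ) (l : List (Fin n × Fin n)) :
    ∀ (u : Equiv.Perm (Fin n)), IsKPath k u l → List.Chain' (· < ·) (pathLabels u l) →
    (∀ i ∈ l.map Prod.snd, k ≤ i.val) ∧
    (l.map Prod.snd).Nodup ∧
    (∀ i : Fin n, k ≤ i.val → (pathEnd u l i ≠ u i ↔ i ∈ l.map Prod.snd)) ∧
    (∀ i : Fin n, k ≤ i.val → i ∈ l.map Prod.snd → ∃ τ ∈ pathLabels u l, τ < u i) := by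
  induction l with
  | nil => intro u _ _; simp [pathEnd]
  | cons p t ih =>
    obtain ⟨a, b⟩ := p
    intro u hpath hchain
    obtain ⟨ha, hb, hlt, hpath'⟩ := hpath
    have ha' : a.val < k := ha
    have hb' : k ≤ b.val := hb
    set u' := u * Equiv.swap a b with hu'
    have hlab : pathLabels u ((a,b)::t) = u a :: pathLabels u' t := rfl
    rw [hlab] at hchain
    have hchain' : List.Chain' (· < ·) (pathLabels u' t) := hchain.tail
    have hallgt : ∀ τ ∈ pathLabels u' t, u a < τ := by
      have hp := (List.isChain_iff_pairwise).1 hchain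
      exact fun τ hτ => (List.pairwise_cons.1 hp).1 τ hτ
    obtain ⟨ih0, ih1, ih2, ih3⟩ := ih u' hpath' hchain'
    have hu'b : u' b = u a := by simp [hu', Equiv.Perm.mul_apply]
    have hbnotin : b ∉ t.map Prod.snd := by
      intro hmem
      obtain ⟨τ, hτmem, hτlt⟩ := ih3 b hb hmem
      rw [hu'b] at hτlt
      exact absurd (hallgt τ hτmem) (not_lt.2 hτlt.le)
    have hendeq : pathEnd u ((a,b)::t) = pathEnd u' t := pathEnd_cons u (a,b) t
    have hfix : ∀ i : Fin n, i ≠ b → k ≤ i.val → u' i = u i := by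
      intro i hib hik
      have hia : i ≠ a := by
        intro h
        rw [h] at hik
        omega
      simp [hu', Equiv.Perm.mul_apply, Equiv.swap_apply_of_ne_of_ne hia hib]
    have hmapcons : ((a,b)::t).map Prod.snd = b :: t.map Prod.snd := rfl
    refine ⟨?_, ?_, ?_, ?_⟩
    · intro i hi
      rw [hmapcons, List.mem_cons] at hi
      rcases hi with h | h
      · rw [h]; exact hb'
      · exact ih0 i h
    · rw [hmapcons]
      exact List.nodup_cons.2 ⟨hbnotin, ih1⟩
    · intro i hik
      rw [hendeq, hmapcons, List.mem_cons]
      by_cases hib : i = b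
      · subst hib
        have h1 : pathEnd u' t i = u' i := by
          by_contra h
          exact hbnotin ((ih2 i hik).1 h)
        constructor
        · intro _; exact Or.inl rfl
        · intro _
          rw [h1, hu'b]
          exact fun h => absurd hlt (h ▸ lt_irrefl _)
      · rw [← hfix i hib hik, ih2 i hik]
        constructor
        · exact Or.inr
        · rintro (h | h)
          · exact absurd h hib
          · exact h
    · intro i hik hi
      rw [hmapcons, List.mem_cons] at hi
      rw [hlab]
      by_cases hib : i = b
      · subst hib
        exact ⟨u a, List.mem_cons_self, hlt⟩
      · rcases hi with h | h
        · exact absurd h hib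
        · obtain ⟨τ, hτmem, hτlt⟩ := ih3 i hik h
          rw [hfix i hib hik] at hτlt
          exact ⟨τ, List.mem_cons_of_mem _ hτmem, hτlt⟩

/-- A decreasing path from `u` to `w` in the extended `k`-Bruhat order has
length `#([k] ∩ M(u⁻¹w))`; an increasing one has length `#({k+1,…,n} ∩ M(u⁻¹w))`. -/
theorem stmt11 (n k : ℕ) (u w : Equiv.Perm (Fin n))
    (l : List (Fin n × Fin n)) (hpath : IsKPath k u l) (hend : pathEnd u l = w) :
    (List.Chain' (· > ·) (pathLabels u l) →
        l.length = (Finset.univ.filter fun i : Fin n => i.val < k ∧ u i ≠ w i).card) ∧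
      (List.Chain' (· < ·) (pathLabels u l) →
        l.length = (Finset.univ.filter fun i : Fin n => k ≤ i.val ∧ u i ≠ w i).card) := by
  subst hend
  constructor
  · intro hchain
    obtain ⟨h0, h1, h2, _⟩ := dec_lemma k l u hpath hchain
    have hset : (Finset.univ.filter fun i : Fin n => i.val < k ∧ u i ≠ pathEnd u l i)
        = (l.map Prod.fst).toFinset := by
      ext i
      simp only [Finset.mem_filter, Finset.mem_univ, true_and, List.mem_toFinset]
      constructor
      · rintro ⟨hik, hne⟩
        exact (h2 i hik).1 (Ne.symm hne)
      · intro h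
        exact ⟨h0 i h, Ne.symm ((h2 i (h0 i h)).2 h)⟩
    rw [hset, List.card_toFinset, h1.dedup, List.length_map]
  · intro hchain
    obtain ⟨h0, h1, h2, _⟩ := inc_lemma k l u hpath hchain
    have hset : (Finset.univ.filter fun i : Fin n => k ≤ i.val ∧ u i ≠ pathEnd u l i)
        = (l.map Prod.snd).toFinset := by
      ext i
      simp only [Finset.mem_filter, Finset.mem_univ, true_and, List.mem_toFinset]
      constructor
      · rintro ⟨hik, hne⟩
        exact (h2 i hik).1 (Ne.symm hne)
      · intro h
        exact ⟨h0 i h, Ne.symm ((h2 i (h0 i h)).2 h)⟩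
    rw [hset, List.card_toFinset, h1.dedup, List.length_map]
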